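/- arXiv:1802.00240 — 5 statements merged into one kernel-verified Lean document; each statement's English description precedes it below -/
import Mathlib

section
/- Let c₂ ≠ 1 and let w(x,y) = c₁·x^{1/(1−c₂)}·(y+ax)^{c₂/(c₂−1)} on an open set where x > 0 and y + ax > 0. Then the isotropic Gaussian curvature K = w_xx·w_yy − (w_xy)² of the graph z = w(x,y) vanishes identically. -/
noncomputable def wxx (w : ℝ → ℝ → ℝ) (x y : ℝ) : ℝ :=
  deriv (fun t => deriv (fun t' => w t' y) t) x

noncomputable def wyy (w : ℝ → ℝ → ℝ) (x y : ℝ) : ℝ :=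
  deriv (fun s => deriv (fun s' => w x s') s) y

noncomputable def wxy (w : ℝ → ℝ → ℝ) (x y : ℝ) : ℝ :=
  deriv (fun s => deriv (fun t => w t s) x) y

/-- Isotropic Gaussian curvature of the graph z = w(x,y). -/
noncomputable def Kiso (w : ℝ → ℝ → ℝ) (x y : ℝ) : ℝ :=
  wxx w x y * wyy w x y - (wxy w x y)^2

/-- Isotropic mean curvature of the graph z = w(x,y). -/
noncomputable def Hiso (w : ℝ → ℝ → ℝ) (x y : ℝ) : ℝ :=
  (wxx w x y + wyy w x y) / 2

noncomputable def D2 (f : ℝ → ℝ) : ℝ → ℝ := deriv (deriv f)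

private lemma d1 (c₁ p q a s t : ℝ) (ht : 0 < t) (hu : 0 < s + a * t) :
    HasDerivAt (fun t' => c₁ * t' ^ p * (s + a * t') ^ q)
      (c₁ * (p * t ^ (p-1)) * (s + a*t) ^ q + c₁ * t ^ p * (a * q * (s + a*t) ^ (q-1))) t := by
  have h1 : HasDerivAt (fun t' : ℝ => t' ^ p) (p * t ^ (p-1)) t :=
    Real.hasDerivAt_rpow_const (Or.inl ht.ne')
  have h2 : HasDerivAt (fun t' : ℝ => s + a * t') a t := by
    simpa using ((hasDerivAt_id t).const_mul a).const_add s
  have h3 : HasDerivAt (fun t' : ℝ => (s + a * t') ^ q) (a * q * (s + a*t) ^ (q-1)) t :=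
    h2.rpow_const (Or.inl hu.ne')
  exact (h1.const_mul c₁).mul h3

private lemma wxx_eq (c₁ p q a y x : ℝ) (hx : 0 < x) (hu : 0 < y + a * x) :
    wxx (fun x y => c₁ * x ^ p * (y + a * x) ^ q) x y =
      c₁ * (p * ((p-1) * x ^ (p-2))) * (y + a*x) ^ q
      + 2 * (c₁ * (p * x ^ (p-1)) * (a * q * (y + a*x) ^ (q-1)))
      + c₁ * x ^ p * (a * q * (a * (q-1) * (y + a*x) ^ (q-2))) := by
  have hEq : (fun t => deriv (fun t' => c₁ * t' ^ p * (y + a * t') ^ q) t)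
      =ᶠ[nhds x] (fun t => c₁ * (p * t ^ (p-1)) * (y + a*t) ^ q
                    + c₁ * t ^ p * (a * q * (y + a*t) ^ (q-1))) := by
    have h1 : ∀ᶠ t in nhds x, 0 < t := eventually_gt_nhds hx
    have hcont : ContinuousAt (fun t : ℝ => y + a * t) x := by fun_prop
    have h2 : ∀ᶠ t in nhds x, 0 < y + a * t := hcont.eventually (eventually_gt_nhds hu)
    filter_upwards [h1, h2] with t ht1 ht2
    exact (d1 c₁ p q a y t ht1 ht2).deriv
  have hA : HasDerivAt (fun t : ℝ => t ^ (p-1)) ((p-1) * x ^ (p-1-1)) x :=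
    Real.hasDerivAt_rpow_const (Or.inl hx.ne')
  have hB : HasDerivAt (fun t : ℝ => t ^ p) (p * x ^ (p-1)) x :=
    Real.hasDerivAt_rpow_const (Or.inl hx.ne')
  have h2 : HasDerivAt (fun t : ℝ => y + a * t) a x := by
    simpa using ((hasDerivAt_id x).const_mul a).const_add y
  have h3 : HasDerivAt (fun t : ℝ => (y + a * t) ^ q) (a * q * (y + a*x) ^ (q-1)) x :=
    h2.rpow_const (Or.inl hu.ne')
  have h4 : HasDerivAt (fun t : ℝ => (y + a * t) ^ (q-1)) (a * (q-1) * (y + a*x) ^ (q-1-1)) x :=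
    h2.rpow_const (Or.inl hu.ne')
  have t1 := ((hA.const_mul p).const_mul c₁).mul h3
  have t2 := (hB.const_mul c₁).mul (h4.const_mul (a*q))
  have hD := (t1.add t2).deriv
  have : wxx (fun x y => c₁ * x ^ p * (y + a * x) ^ q) x y
      = deriv (fun t => c₁ * (p * t ^ (p-1)) * (y + a*t) ^ q
                    + c₁ * t ^ p * (a * q * (y + a*t) ^ (q-1))) x := hEq.deriv_eq
  rw [this, show deriv (fun t => c₁ * (p * t ^ (p-1)) * (y + a*t) ^ q
                      + c₁ * t ^ p * (a * q * (y + a*t) ^ (q-1))) x = _ from hD,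
    show p-1-1 = p-2 from by ring, show q-1-1 = q-2 from by ring]
  ring

private lemma wyy_eq (c₁ p q a y x : ℝ) (hx : 0 < x) (hu : 0 < y + a * x) :
    wyy (fun x y => c₁ * x ^ p * (y + a * x) ^ q) x y =
      c₁ * x ^ p * (q * ((q-1) * (y + a*x) ^ (q-2))) := by
  have hEq : (fun s => deriv (fun s' => c₁ * x ^ p * (s' + a * x) ^ q) s)
      =ᶠ[nhds y] (fun s => c₁ * x ^ p * (1 * q * (s + a*x) ^ (q-1))) := by
    have hcont : ContinuousAt (fun s : ℝ => s + a * x) y := by fun_prop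
    have h2 : ∀ᶠ s in nhds y, 0 < s + a * x := hcont.eventually (eventually_gt_nhds hu)
    filter_upwards [h2] with s hs
    have hid : HasDerivAt (fun s' : ℝ => s' + a * x) 1 s := (hasDerivAt_id s).add_const (a*x)
    exact ((hid.rpow_const (Or.inl hs.ne')).const_mul (c₁ * x ^ p)).deriv
  have hid : HasDerivAt (fun s : ℝ => s + a * x) 1 y := (hasDerivAt_id y).add_const (a*x)
  have h4 : HasDerivAt (fun s : ℝ => (s + a * x) ^ (q-1)) (1 * (q-1) * (y + a*x) ^ (q-1-1)) y :=
    hid.rpow_const (Or.inl hu.ne')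
  have hD := ((h4.const_mul (1*q)).const_mul (c₁ * x ^ p)).deriv
  have hw : wyy (fun x y => c₁ * x ^ p * (y + a * x) ^ q) x y
      = deriv (fun s => c₁ * x ^ p * (1 * q * (s + a*x) ^ (q-1))) y := hEq.deriv_eq
  rw [hw, hD, show q-1-1 = q-2 from by ring]
  ring

private lemma wxy_eq (c₁ p q a y x : ℝ) (hx : 0 < x) (hu : 0 < y + a * x) :
    wxy (fun x y => c₁ * x ^ p * (y + a * x) ^ q) x y =
      c₁ * (p * x ^ (p-1)) * (1 * q * (y + a*x) ^ (q-1))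
      + c₁ * x ^ p * (a * q * (1 * (q-1) * (y + a*x) ^ (q-2))) := by
  have hEq : (fun s => deriv (fun t => c₁ * t ^ p * (s + a * t) ^ q) x)
      =ᶠ[nhds y] (fun s => c₁ * (p * x ^ (p-1)) * (s + a*x) ^ q
                    + c₁ * x ^ p * (a * q * (s + a*x) ^ (q-1))) := by
    have hcont : ContinuousAt (fun s : ℝ => s + a * x) y := by fun_prop
    have h2 : ∀ᶠ s in nhds y, 0 < s + a * x := hcont.eventually (eventually_gt_nhds hu)
    filter_upwards [h2] with s hs
    exact (d1 c₁ p q a s x hx hs).deriv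
  have hid : HasDerivAt (fun s : ℝ => s + a * x) 1 y := (hasDerivAt_id y).add_const (a*x)
  have h3 : HasDerivAt (fun s : ℝ => (s + a * x) ^ q) (1 * q * (y + a*x) ^ (q-1)) y :=
    hid.rpow_const (Or.inl hu.ne')
  have h4 : HasDerivAt (fun s : ℝ => (s + a * x) ^ (q-1)) (1 * (q-1) * (y + a*x) ^ (q-1-1)) y :=
    hid.rpow_const (Or.inl hu.ne')
  have t1 := h3.const_mul (c₁ * (p * x ^ (p-1)))
  have t2 := (h4.const_mul (a*q)).const_mul (c₁ * x ^ p)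
  have hD := (t1.add t2).deriv
  have hw : wxy (fun x y => c₁ * x ^ p * (y + a * x) ^ q) x y
      = deriv (fun s => c₁ * (p * x ^ (p-1)) * (s + a*x) ^ q
                    + c₁ * x ^ p * (a * q * (s + a*x) ^ (q-1))) y := hEq.deriv_eq
  rw [hw, show deriv (fun s => c₁ * (p * x ^ (p-1)) * (s + a*x) ^ q
                      + c₁ * x ^ p * (a * q * (s + a*x) ^ (q-1))) y = _ from hD,
    show q-1-1 = q-2 from by ring]

private lemma key (a c₁ p q : ℝ) (hpq : q = 1 - p) :
    ∀ x y : ℝ, 0 < x → 0 < y + a * x →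
      Kiso (fun x y => c₁ * x ^ p * (y + a * x) ^ q) x y = 0 := by
  intro x y hx hu
  have e1 : x ^ (p-1) = x ^ (p-2) * x := by
    have h := Real.rpow_add hx (p-2) 1
    rw [Real.rpow_one] at h
    rw [show p-1 = p-2+1 from by ring, h]
  have e2 : x ^ p = x ^ (p-1) * x := by
    conv_lhs => rw [show p = p-1+1 from by ring]
    rw [Real.rpow_add hx, Real.rpow_one]
  have f1 : (y + a*x) ^ (q-1) = (y + a*x) ^ (q-2) * (y + a*x) := by
    have h := Real.rpow_add hu (q-2) 1
    rw [Real.rpow_one] at h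
    rw [show q-1 = q-2+1 from by ring, h]
  have f2 : (y + a*x) ^ q = (y + a*x) ^ (q-1) * (y + a*x) := by
    conv_lhs => rw [show q = q-1+1 from by ring]
    rw [Real.rpow_add hu, Real.rpow_one]
  rw [Kiso, wxx_eq c₁ p q a y x hx hu, wyy_eq c₁ p q a y x hx hu,
    wxy_eq c₁ p q a y x hx hu, e2, e1, f2, f1, hpq]
  ring

theorem stmt1 (a c₁ c₂ : ℝ) (ha : a ≠ 0) (hc : c₂ ≠ 1) :
    ∀ x y : ℝ, 0 < x → 0 < y + a * x →
      Kiso (fun x y => c₁ * x ^ (1 / (1 - c₂)) * (y + a * x) ^ (c₂ / (c₂ - 1))) x y = 0 := by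
  have h1 : (1:ℝ) - c₂ ≠ 0 := sub_ne_zero.mpr (Ne.symm hc)
  have h2 : c₂ - 1 ≠ 0 := sub_ne_zero.mpr hc
  have hpq : c₂ / (c₂ - 1) = 1 - 1 / (1 - c₂) := by
    field_simp
    ring
  exact key a c₁ (1 / (1 - c₂)) (c₂ / (c₂ - 1)) hpq
end

section
/- Let f₁, f₂ : ℝ → ℝ be twice differentiable functions such that K₀ := f₁(u₁)f₂(u₂)f₁''(u₁)f₂''(u₂) − (f₁'(u₁)f₂'(u₂))² is a nonzero constant for all (u₁,u₂), with f₁'' identically zero and f₁ non-constant. Then f₁(u₁) = c₁u₁ + c₂ with c₁ ≠ 0, K₀ < 0, and f₂'(u₂)² = −K₀/c₁², so f₂ is affine with slope ±√(−K₀)/|c₁|. -/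
lemma affine_of_deriv_const (f : ℝ → ℝ) (c : ℝ)
    (hf : ∀ t, DifferentiableAt ℝ f t) (hd : ∀ t, deriv f t = c) :
    ∀ t, f t = c * t + f 0 := by
  have h : ∀ t, f t - c * t = f 0 - c * 0 := by
    intro t
    have := is_const_of_deriv_eq_zero (f := fun t => f t - c * t)
      (fun t => (hf t).sub (differentiableAt_id.const_mul c)) ?_ t 0
    · linarith [this]
    · intro x
      have : DifferentiableAt ℝ (fun t : ℝ => c * t) x := differentiableAt_id.const_mul c
      rw [deriv_fun_sub (hf x) this, deriv_const_mul _ differentiableAt_id]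
      simp [hd x]
  intro t
  have := h t
  linarith

theorem stmt4 (f₁ f₂ : ℝ → ℝ) (K₀ : ℝ)
    (hf₁ : ∀ t, DifferentiableAt ℝ f₁ t) (hf₁' : ∀ t, DifferentiableAt ℝ (deriv f₁) t)
    (hf₂ : ∀ t, DifferentiableAt ℝ f₂ t) (hf₂' : ∀ t, DifferentiableAt ℝ (deriv f₂) t)
    (hK₀ : K₀ ≠ 0)
    (hK : ∀ u₁ u₂ : ℝ,
      f₁ u₁ * f₂ u₂ * D2 f₁ u₁ * D2 f₂ u₂ - (deriv f₁ u₁ * deriv f₂ u₂)^2 = K₀)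
    (h₁'' : ∀ t, D2 f₁ t = 0)
    (h₁nc : ∃ s t, f₁ s ≠ f₁ t) :
    ∃ c₁ c₂ : ℝ, c₁ ≠ 0 ∧ (∀ t, f₁ t = c₁ * t + c₂) ∧ K₀ < 0 ∧
      (∀ u, (deriv f₂ u)^2 = -K₀ / c₁^2) ∧
      ∃ c₃ : ℝ, (∀ u, f₂ u = (Real.sqrt (-K₀) / |c₁|) * u + c₃) ∨
                 (∀ u, f₂ u = -(Real.sqrt (-K₀) / |c₁|) * u + c₃) := by
  classical
  set c₁ := deriv f₁ 0 with hc₁def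
  have hd1 : ∀ t, deriv f₁ t = c₁ := fun t =>
    is_const_of_deriv_eq_zero (fun x => hf₁' x) (fun x => h₁'' x) t 0
  have hf1aff : ∀ t, f₁ t = c₁ * t + f₁ 0 := affine_of_deriv_const f₁ c₁ hf₁ hd1
  have hc₁ : c₁ ≠ 0 := by
    intro h
    obtain ⟨s, t, hst⟩ := h₁nc
    apply hst; rw [hf1aff s, hf1aff t, h]; ring
  set g := deriv f₂ with hgdef
  have hKey : ∀ u, -(c₁ * g u)^2 = K₀ := by
    intro u
    have := hK 0 u
    rw [h₁'' 0, hd1 0] at this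
    linarith [this]
  have hK₀neg : K₀ < 0 := by
    have hle : K₀ ≤ 0 := by nlinarith [sq_nonneg (c₁ * g 0), hKey 0]
    exact lt_of_le_of_ne hle hK₀
  have hc₁sq : (0:ℝ) < c₁^2 := by positivity
  have hgsq : ∀ u, (g u)^2 = -K₀ / c₁^2 := by
    intro u
    have := hKey u
    field_simp
    nlinarith [this]
  set m := Real.sqrt (-K₀) / |c₁| with hmdef
  have hmpos : 0 < m :=
    div_pos (Real.sqrt_pos.mpr (by linarith)) (abs_pos.mpr hc₁)
  have hmsq : m^2 = -K₀ / c₁^2 := by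
    rw [hmdef, div_pow, sq_abs, Real.sq_sqrt (by linarith : (0:ℝ) ≤ -K₀)]
  have hgm : ∀ u, g u = m ∨ g u = -m := by
    intro u
    have h : (g u - m) * (g u + m) = 0 := by
      have := hgsq u; rw [← hmsq] at this; nlinarith [this]
    rcases mul_eq_zero.mp h with h | h
    · left; linarith
    · right; linarith
  have hgcont : Continuous g := by
    rw [continuous_iff_continuousAt]; exact fun x => (hf₂' x).continuousAt
  have noZero : ∀ a b : ℝ, g a = m → g b = -m → False := by
    intro a b ha hb
    have hmem : (0:ℝ) ∈ Set.uIcc (g a) (g b) := by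
      rw [ha, hb]
      exact Set.mem_uIcc.mpr (Or.inr ⟨by linarith, by linarith⟩)
    obtain ⟨c, _, hc⟩ := intermediate_value_uIcc (hgcont.continuousOn) hmem
    have h0' : (0:ℝ)^2 = -K₀ / c₁^2 := by rw [← hc]; exact hgsq c
    have : K₀ = 0 := by field_simp at h0'; linarith
    exact hK₀ this
  have hgconst : (∀ u, g u = m) ∨ (∀ u, g u = -m) := by
    rcases hgm 0 with h0 | h0
    · left; intro u
      rcases hgm u with h | h
      · exact h
      · exact absurd (noZero 0 u h0 h) (by simp)
    · right; intro u
      rcases hgm u with h | h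
      · exact absurd (noZero u 0 h h0) (by simp)
      · exact h
  refine ⟨c₁, f₁ 0, hc₁, hf1aff, hK₀neg, hgsq, f₂ 0, ?_⟩
  rcases hgconst with h | h
  · left; exact affine_of_deriv_const f₂ m hf₂ h
  · right
    have := affine_of_deriv_const f₂ (-m) hf₂ h
    intro u; rw [this u]
end

section
/- Let f₁, f₂ : ℝ → ℝ be twice continuously differentiable with f₁'' never zero and f₂'' never zero, f₁, f₂, f₁', f₂' nowhere zero, and suppose f₁f₂f₁''f₂'' − (f₁'f₂')² = K₀ is a nonzero constant on ℝ². Then a contradiction follows; i.e., no such pair (f₁, f₂) exists. -/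
lemma sq_deriv_not_const (f : ℝ → ℝ) (hf : ContDiff ℝ 2 f)
    (h' : ∀ t, deriv f t ≠ 0) (h'' : ∀ t, D2 f t ≠ 0) :
    ∃ s t, (deriv f s)^2 ≠ (deriv f t)^2 := by
  by_contra h
  push_neg at h
  have hd : Differentiable ℝ (deriv f) := by
    have h2 : ContDiff ℝ (1 + 1) f := by norm_num; exact hf
    exact ((contDiff_succ_iff_deriv.mp h2).2.2).differentiable one_ne_zero
  have h1 : HasDerivAt (fun t => (deriv f t)^2) (↑(2:ℕ) * deriv f 0 ^ 1 * D2 f 0) 0 :=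
    ((hd 0).hasDerivAt).pow 2
  have heq : (fun t : ℝ => (deriv f t)^2) = fun _ => (deriv f 0)^2 :=
    funext fun t => h t 0
  have h2 : HasDerivAt (fun t : ℝ => (deriv f t)^2) 0 0 := by
    rw [heq]; exact hasDerivAt_const 0 _
  have h3 := h1.unique h2
  have := mul_ne_zero (mul_ne_zero (by norm_num : ((2:ℕ):ℝ) ≠ 0)
    (pow_ne_zero 1 (h' 0))) (h'' 0)
  exact this h3

theorem stmt5 (f₁ f₂ : ℝ → ℝ) (K₀ : ℝ)
    (hf₁ : ContDiff ℝ 2 f₁) (hf₂ : ContDiff ℝ 2 f₂)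
    (h₁'' : ∀ t, D2 f₁ t ≠ 0) (h₂'' : ∀ t, D2 f₂ t ≠ 0)
    (h₁0 : ∀ t, f₁ t ≠ 0) (h₂0 : ∀ t, f₂ t ≠ 0)
    (h₁'0 : ∀ t, deriv f₁ t ≠ 0) (h₂'0 : ∀ t, deriv f₂ t ≠ 0)
    (hK₀ : K₀ ≠ 0)
    (hK : ∀ u₁ u₂ : ℝ,
      f₁ u₁ * f₂ u₂ * D2 f₁ u₁ * D2 f₂ u₂ - (deriv f₁ u₁ * deriv f₂ u₂)^2 = K₀) :
    False := by
  obtain ⟨s, t, hst⟩ := sq_deriv_not_const f₂ hf₂ h₂'0 h₂''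
  obtain ⟨p, q, hpq⟩ := sq_deriv_not_const f₁ hf₁ h₁'0 h₁''
  set A : ℝ → ℝ := fun u => f₁ u * D2 f₁ u with hA
  set B : ℝ → ℝ := fun u => (deriv f₁ u)^2 with hB
  set C : ℝ → ℝ := fun v => f₂ v * D2 f₂ v with hC
  set D : ℝ → ℝ := fun v => (deriv f₂ v)^2 with hD
  have hKK : ∀ u v : ℝ, A u * C v - B u * D v = K₀ := by
    intro u v
    simp only [hA, hB, hC, hD]
    linear_combination hK u v
  have eq1 : A 0 * (C s - C t) = B 0 * (D s - D t) := by
    linear_combination (hKK 0 s) - (hKK 0 t)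
  have eq2 : C s * (A p - A q) = D s * (B p - B q) := by
    linear_combination (hKK p s) - (hKK q s)
  have eq3 : C t * (A p - A q) = D t * (B p - B q) := by
    linear_combination (hKK p t) - (hKK q t)
  have key1 : C s * (A 0 * (B p - B q) - B 0 * (A p - A q)) = K₀ * (B p - B q) := by
    linear_combination (B p - B q) * (hKK 0 s) - B 0 * eq2
  have key2 : C t * (A 0 * (B p - B q) - B 0 * (A p - A q)) = K₀ * (B p - B q) := by
    linear_combination (B p - B q) * (hKK 0 t) - B 0 * eq3
  have hB0 : B 0 ≠ 0 := pow_ne_zero 2 (h₁'0 0)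
  have hDst : D s - D t ≠ 0 := sub_ne_zero.mpr hst
  have hBpq : B p - B q ≠ 0 := sub_ne_zero.mpr hpq
  by_cases hc : C s = C t
  · have : B 0 * (D s - D t) = 0 := by
      rw [← eq1, hc]; ring
    exact hDst (by
      rcases mul_eq_zero.mp this with h | h
      · exact absurd h hB0
      · exact h)
  · have hX : (C s - C t) * (A 0 * (B p - B q) - B 0 * (A p - A q)) = 0 := by
      linear_combination key1 - key2
    rcases mul_eq_zero.mp hX with h | h
    · exact hc (sub_eq_zero.mp h)
    · have : K₀ * (B p - B q) = 0 := by rw [← key1, h]; ring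
      rcases mul_eq_zero.mp this with h' | h'
      · exact hK₀ h'
      · exact hBpq h'
end

section
/- Let f₁, f₂ : ℝ → ℝ be twice differentiable with f₂' nowhere zero, f₁(u₁) = c₁u₁ + c₂ for some c₁ ≠ 0, and suppose (1+a²)f₁(u₁)f₂''(u₂) + 2a f₁'(u₁)f₂'(u₂) + f₁''(u₁)f₂(u₂) = 0 for all (u₁, u₂), where a ≠ 0. Then a contradiction follows. -/
theorem stmt7 (a c₁ c₂ : ℝ) (f₁ f₂ : ℝ → ℝ)
    (hf₁ : ∀ t, DifferentiableAt ℝ f₁ t) (hf₁' : ∀ t, DifferentiableAt ℝ (deriv f₁) t)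
    (hf₂ : ∀ t, DifferentiableAt ℝ f₂ t) (hf₂' : ∀ t, DifferentiableAt ℝ (deriv f₂) t)
    (ha : a ≠ 0) (hc₁ : c₁ ≠ 0)
    (h₁ : ∀ t, f₁ t = c₁ * t + c₂)
    (h₂' : ∀ t, deriv f₂ t ≠ 0)
    (hmin : ∀ u₁ u₂ : ℝ,
      (1 + a^2) * f₁ u₁ * D2 f₂ u₂ + 2 * a * deriv f₁ u₁ * deriv f₂ u₂
        + D2 f₁ u₁ * f₂ u₂ = 0) :
    False := by
  have hfeq : f₁ = fun t => c₁ * t + c₂ := funext h₁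
  have hd1 : deriv f₁ = fun _ => c₁ := by
    rw [hfeq]; funext t
    rw [deriv_fun_add (by fun_prop) (by fun_prop)]
    rw [show (HMul.hMul c₁ : ℝ → ℝ) = fun t => c₁ * t from rfl]
    rw [deriv_const_mul _ differentiableAt_fun_id]
    simp
  have hd2 : D2 f₁ = fun _ => 0 := by
    unfold D2; rw [hd1]; funext t; simp
  have hkey := hmin (-c₂ / c₁) 0
  rw [hd1, hd2] at hkey
  have hz : f₁ (-c₂ / c₁) = 0 := by
    rw [h₁]; field_simp; ring
  rw [hz] at hkey
  simp only [mul_zero, zero_mul, add_zero, zero_add] at hkey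
  have h2 : (2:ℝ) * a * c₁ ≠ 0 := by
    exact mul_ne_zero (mul_ne_zero two_ne_zero ha) hc₁
  exact h₂' 0 (by
    have := mul_eq_zero.mp hkey
    tauto)
end

section
/- Let f₁, f₂ : ℝ → ℝ be twice differentiable with f₁'' and f₂'' nowhere zero, and f₁, f₂, f₁', f₂' nowhere zero, with a ≠ 0. Then the equation (1+a²)f₁(u₁)f₂''(u₂) + 2af₁'(u₁)f₂'(u₂) + f₁''(u₁)f₂(u₂) = 2H₀ cannot hold identically for any nonzero constant H₀. -/
private lemma caseP (a H₀ lam : ℝ) (f₁ f₂ : ℝ → ℝ)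
    (hf₁ : ∀ t, DifferentiableAt ℝ f₁ t) (hf₁' : ∀ t, DifferentiableAt ℝ (deriv f₁) t)
    (hf₂ : ∀ t, DifferentiableAt ℝ f₂ t) (hf₂' : ∀ t, DifferentiableAt ℝ (deriv f₂) t)
    (hH₀ : H₀ ≠ 0)
    (h₁'' : ∀ t, deriv (deriv f₁) t ≠ 0) (h₂'' : ∀ t, deriv (deriv f₂) t ≠ 0)
    (h₁'0 : ∀ t, deriv f₁ t ≠ 0)
    (hH : ∀ u₁ u₂ : ℝ, (1 + a^2) * f₁ u₁ * deriv (deriv f₂) u₂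
        + 2 * a * deriv f₁ u₁ * deriv f₂ u₂ + deriv (deriv f₁) u₁ * f₂ u₂ = 2 * H₀)
    (hlam : ∀ x, deriv (deriv f₁) x = lam * deriv f₁ x) : False := by
  have hlam0 : lam ≠ 0 := by
    intro h; exact h₁'' 0 (by simpa [h] using hlam 0)
  -- step (i)
  have hi : ∀ y, (1+a^2) * deriv (deriv f₂) y + 2*a*lam*deriv f₂ y + lam^2 * f₂ y = 0 := by
    intro y
    have hfun : (fun x => ((1+a^2)*f₁ x)*deriv (deriv f₂) y + ((2*a)*deriv f₁ x)*deriv f₂ y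
        + (lam*deriv f₁ x)*f₂ y) = fun _ => 2*H₀ := by
      funext x
      linear_combination hH x y - f₂ y * hlam x
    have hD : HasDerivAt (fun x => ((1+a^2)*f₁ x)*deriv (deriv f₂) y + ((2*a)*deriv f₁ x)*deriv f₂ y
        + (lam*deriv f₁ x)*f₂ y)
        ((((1+a^2)*deriv f₁ 0)*deriv (deriv f₂) y + ((2*a)*deriv (deriv f₁) 0)*deriv f₂ y)
          + ((lam*deriv (deriv f₁) 0)*f₂ y)) 0 :=
      ((((hf₁ 0).hasDerivAt.const_mul ((1:ℝ)+a^2)).mul_const _).add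
        (((hf₁' 0).hasDerivAt.const_mul ((2:ℝ)*a)).mul_const _)).add
        (((hf₁' 0).hasDerivAt.const_mul lam).mul_const _)
    rw [hfun] at hD
    have h0 := hD.unique (hasDerivAt_const 0 (2*H₀))
    have h0' : ((1+a^2)*deriv (deriv f₂) y + 2*a*lam*deriv f₂ y + lam^2*f₂ y) * deriv f₁ 0
        = 0 * deriv f₁ 0 := by
      linear_combination h0 - (2*a*deriv f₂ y + lam*f₂ y) * hlam 0
    exact mul_right_cancel₀ (h₁'0 0) h0'
  -- step (ii)
  have hii : ∀ x y, (deriv f₁ x - lam * f₁ x) * (2*a*deriv f₂ y + lam*f₂ y) = 2*H₀ := by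
    intro x y
    linear_combination hH x y - f₁ x * hi y - f₂ y * hlam x
  have hk0 : deriv f₁ 0 - lam * f₁ 0 ≠ 0 := by
    intro h
    apply hH₀
    have h2 := hii 0 0
    rw [h, zero_mul] at h2
    linarith
  -- s constant
  have hs : ∀ y, 2*a*deriv f₂ y + lam*f₂ y = 2*H₀/(deriv f₁ 0 - lam*f₁ 0) := by
    intro y
    have h2 := hii 0 y
    field_simp
    linear_combination h2
  have hds : ∀ y, 2*a*deriv (deriv f₂) y + lam*deriv f₂ y = 0 := by
    intro y
    have hfun : (fun s => ((2*a)*deriv f₂ s) + (lam*f₂ s)) = fun _ => 2*H₀/(deriv f₁ 0 - lam*f₁ 0) := by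
      funext s; linear_combination hs s
    have hD : HasDerivAt (fun s => ((2*a)*deriv f₂ s) + (lam*f₂ s))
        ((2*a)*deriv (deriv f₂) y + lam*deriv f₂ y) y :=
      ((hf₂' y).hasDerivAt.const_mul ((2:ℝ)*a)).add ((hf₂ y).hasDerivAt.const_mul lam)
    rw [hfun] at hD
    have h0 := hD.unique (hasDerivAt_const _ _)
    linear_combination h0
  -- q1 constant
  have hq1 : ∀ y, deriv f₂ y = 4*a*H₀/((deriv f₁ 0 - lam*f₁ 0)*(1+a^2)) := by
    intro y
    have h1 := hi y
    have h2 := hds y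
    have h3 := hii 0 y
    have hE : lam * (deriv f₂ y * ((deriv f₁ 0 - lam*f₁ 0)*(1+a^2)) - 4*a*H₀) = 0 := by
      linear_combination (-2*a*(deriv f₁ 0 - lam*f₁ 0))*h1
        + ((deriv f₁ 0 - lam*f₁ 0)*(1+a^2))*h2 + (2*a*lam)*h3
    have hX := (mul_eq_zero.mp hE).resolve_left hlam0
    have hne : (deriv f₁ 0 - lam*f₁ 0)*(1+a^2) ≠ 0 := mul_ne_zero hk0 (by positivity)
    field_simp
    linear_combination hX
  exact h₂'' 0 (by rw [funext hq1]; simp)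

private lemma caseQ (a H₀ c : ℝ) (f₁ f₂ : ℝ → ℝ)
    (hf₁ : ∀ t, DifferentiableAt ℝ f₁ t) (hf₁' : ∀ t, DifferentiableAt ℝ (deriv f₁) t)
    (hf₂ : ∀ t, DifferentiableAt ℝ f₂ t) (hf₂' : ∀ t, DifferentiableAt ℝ (deriv f₂) t)
    (hH₀ : H₀ ≠ 0)
    (h₁'' : ∀ t, deriv (deriv f₁) t ≠ 0) (h₂'' : ∀ t, deriv (deriv f₂) t ≠ 0)
    (h₂'0 : ∀ t, deriv f₂ t ≠ 0)
    (hH : ∀ u₁ u₂ : ℝ, (1 + a^2) * f₁ u₁ * deriv (deriv f₂) u₂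
        + 2 * a * deriv f₁ u₁ * deriv f₂ u₂ + deriv (deriv f₁) u₁ * f₂ u₂ = 2 * H₀)
    (hc : ∀ y, deriv (deriv f₂) y = c * deriv f₂ y) : False := by
  have hc0 : c ≠ 0 := by
    intro h; exact h₂'' 0 (by simpa [h] using hc 0)
  -- step (i')
  have hi : ∀ x, (1+a^2)*c^2*f₁ x + 2*a*c*deriv f₁ x + deriv (deriv f₁) x = 0 := by
    intro x
    have hfun : (fun y => (((1+a^2)*f₁ x*c + 2*a*deriv f₁ x)*deriv f₂ y)
        + ((deriv (deriv f₁) x)*f₂ y)) = fun _ => 2*H₀ := by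
      funext y
      linear_combination hH x y - (1+a^2)*f₁ x * hc y
    have hD : HasDerivAt (fun y => (((1+a^2)*f₁ x*c + 2*a*deriv f₁ x)*deriv f₂ y)
        + ((deriv (deriv f₁) x)*f₂ y))
        (((1+a^2)*f₁ x*c + 2*a*deriv f₁ x)*deriv (deriv f₂) 0 + (deriv (deriv f₁) x)*deriv f₂ 0) 0 :=
      ((hf₂' 0).hasDerivAt.const_mul _).add ((hf₂ 0).hasDerivAt.const_mul _)
    rw [hfun] at hD
    have h0 := hD.unique (hasDerivAt_const 0 (2*H₀))
    have h0' : ((1+a^2)*c^2*f₁ x + 2*a*c*deriv f₁ x + deriv (deriv f₁) x) * deriv f₂ 0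
        = 0 * deriv f₂ 0 := by
      linear_combination h0 - ((1+a^2)*f₁ x*c + 2*a*deriv f₁ x) * hc 0
    exact mul_right_cancel₀ (h₂'0 0) h0'
  -- step (ii')
  have hii : ∀ x y, ((1+a^2)*c*f₁ x + 2*a*deriv f₁ x) * (deriv f₂ y - c*f₂ y) = 2*H₀ := by
    intro x y
    linear_combination hH x y - (1+a^2)*f₁ x * hc y - f₂ y * hi x
  have hk0 : deriv f₂ 0 - c * f₂ 0 ≠ 0 := by
    intro h
    apply hH₀
    have h2 := hii 0 0
    rw [h, mul_zero] at h2
    linarith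
  have ht : ∀ x, (1+a^2)*c*f₁ x + 2*a*deriv f₁ x = 2*H₀/(deriv f₂ 0 - c*f₂ 0) := by
    intro x
    have h2 := hii x 0
    field_simp
    linear_combination h2
  have hdt : ∀ x, (1+a^2)*c*deriv f₁ x + 2*a*deriv (deriv f₁) x = 0 := by
    intro x
    have hfun : (fun t => (((1+a^2)*c)*f₁ t) + ((2*a)*deriv f₁ t))
        = fun _ => 2*H₀/(deriv f₂ 0 - c*f₂ 0) := by
      funext t; linear_combination ht t
    have hD : HasDerivAt (fun t => (((1+a^2)*c)*f₁ t) + ((2*a)*deriv f₁ t))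
        (((1+a^2)*c)*deriv f₁ x + (2*a)*deriv (deriv f₁) x) x :=
      ((hf₁ x).hasDerivAt.const_mul _).add ((hf₁' x).hasDerivAt.const_mul _)
    rw [hfun] at hD
    have h0 := hD.unique (hasDerivAt_const _ _)
    linear_combination h0
  have hp1 : ∀ x, deriv f₁ x = 4*a*H₀/((deriv f₂ 0 - c*f₂ 0)*(1+a^2)) := by
    intro x
    have h1 := hi x
    have h2 := hdt x
    have h3 := hii x 0
    have hE : c * (deriv f₁ x * ((deriv f₂ 0 - c*f₂ 0)*(1+a^2)) - 4*a*H₀) = 0 := by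
      linear_combination (deriv f₂ 0 - c*f₂ 0)*h2 - (2*a*(deriv f₂ 0 - c*f₂ 0))*h1 + (2*a*c)*h3
    have hX := (mul_eq_zero.mp hE).resolve_left hc0
    have hne : (deriv f₂ 0 - c*f₂ 0)*(1+a^2) ≠ 0 := mul_ne_zero hk0 (by positivity)
    field_simp
    linear_combination hX
  exact h₁'' 0 (by rw [funext hp1]; simp)

theorem stmt11 (a H₀ : ℝ) (f₁ f₂ : ℝ → ℝ)
    (hf₁ : ∀ t, DifferentiableAt ℝ f₁ t) (hf₁' : ∀ t, DifferentiableAt ℝ (deriv f₁) t)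
    (hf₂ : ∀ t, DifferentiableAt ℝ f₂ t) (hf₂' : ∀ t, DifferentiableAt ℝ (deriv f₂) t)
    (ha : a ≠ 0) (hH₀ : H₀ ≠ 0)
    (h₁'' : ∀ t, D2 f₁ t ≠ 0) (h₂'' : ∀ t, D2 f₂ t ≠ 0)
    (h₁0 : ∀ t, f₁ t ≠ 0) (h₂0 : ∀ t, f₂ t ≠ 0)
    (h₁'0 : ∀ t, deriv f₁ t ≠ 0) (h₂'0 : ∀ t, deriv f₂ t ≠ 0)
    (hH : ∀ u₁ u₂ : ℝ,
      (1 + a^2) * f₁ u₁ * D2 f₂ u₂ + 2 * a * deriv f₁ u₁ * deriv f₂ u₂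
        + D2 f₁ u₁ * f₂ u₂ = 2 * H₀) :
    False := by
  simp only [D2] at hH h₁'' h₂''
  -- existence & value of the third derivative of f₁
  have hAfull : ∀ x y, HasDerivAt (deriv (deriv f₁))
      ((0 - ((1+a^2)*deriv (deriv f₂) y)*deriv f₁ x - ((2*a)*deriv f₂ y)*deriv (deriv f₁) x)
        /(f₂ y)) x := by
    intro x y
    have hfun : deriv (deriv f₁) = fun t =>
        (2*H₀ - ((1+a^2)*deriv (deriv f₂) y)*f₁ t - ((2*a)*deriv f₂ y)*deriv f₁ t)/(f₂ y) := by
      funext t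
      have hy := h₂0 y
      field_simp
      linear_combination hH t y
    have hD : HasDerivAt (fun t =>
        (2*H₀ - ((1+a^2)*deriv (deriv f₂) y)*f₁ t - ((2*a)*deriv f₂ y)*deriv f₁ t)/(f₂ y))
        ((0 - ((1+a^2)*deriv (deriv f₂) y)*deriv f₁ x - ((2*a)*deriv f₂ y)*deriv (deriv f₁) x)
          /(f₂ y)) x :=
      (((hasDerivAt_const x (2*H₀)).sub ((hf₁ x).hasDerivAt.const_mul _)).sub
        ((hf₁' x).hasDerivAt.const_mul _)).div_const _
    rw [← hfun] at hD
    exact hD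
  have hp2d : ∀ x, DifferentiableAt ℝ (deriv (deriv f₁)) x := fun x =>
    (hAfull x 0).differentiableAt
  have hA : ∀ x y, (1+a^2)*deriv f₁ x*deriv (deriv f₂) y
      + 2*a*deriv (deriv f₁) x*deriv f₂ y + deriv (deriv (deriv f₁)) x * f₂ y = 0 := by
    intro x y
    have h := (hAfull x y).deriv
    rw [h]
    have hy := h₂0 y
    field_simp
    ring
  -- existence & value of the third derivative of f₂
  have hBfull : ∀ y x, HasDerivAt (deriv (deriv f₂))
      ((0 - ((2*a)*deriv f₁ x)*deriv (deriv f₂) y - (deriv (deriv f₁) x)*deriv f₂ y)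
        /((1+a^2)*f₁ x)) y := by
    intro y x
    have hx : (1+a^2)*f₁ x ≠ 0 := mul_ne_zero (by positivity) (h₁0 x)
    have hfun : deriv (deriv f₂) = fun s =>
        (2*H₀ - ((2*a)*deriv f₁ x)*deriv f₂ s - (deriv (deriv f₁) x)*f₂ s)/((1+a^2)*f₁ x) := by
      funext s
      have hx1 := h₁0 x
      field_simp
      linear_combination hH x s
    have hD : HasDerivAt (fun s =>
        (2*H₀ - ((2*a)*deriv f₁ x)*deriv f₂ s - (deriv (deriv f₁) x)*f₂ s)/((1+a^2)*f₁ x))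
        ((0 - ((2*a)*deriv f₁ x)*deriv (deriv f₂) y - (deriv (deriv f₁) x)*deriv f₂ y)
          /((1+a^2)*f₁ x)) y :=
      (((hasDerivAt_const y (2*H₀)).sub ((hf₂' y).hasDerivAt.const_mul _)).sub
        ((hf₂ y).hasDerivAt.const_mul _)).div_const _
    rw [← hfun] at hD
    exact hD
  have hB : ∀ x y, (1+a^2)*f₁ x*deriv (deriv (deriv f₂)) y
      + 2*a*deriv f₁ x*deriv (deriv f₂) y + deriv (deriv f₁) x*deriv f₂ y = 0 := by
    intro x y
    have h := (hBfull y x).deriv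
    rw [h]
    have hx : (1+a^2)*f₁ x ≠ 0 := mul_ne_zero (by positivity) (h₁0 x)
    have hx1 := h₁0 x
    field_simp
    ring
  -- mixed identity (C)
  have hC : ∀ x y, (1+a^2)*deriv f₁ x*deriv (deriv (deriv f₂)) y
      + 2*a*deriv (deriv f₁) x*deriv (deriv f₂) y + deriv (deriv (deriv f₁)) x*deriv f₂ y = 0 := by
    intro x y
    have hfun : (fun t => ((1+a^2)*deriv (deriv (deriv f₂)) y)*f₁ t
        + ((2*a)*deriv (deriv f₂) y)*deriv f₁ t + (deriv f₂ y)*deriv (deriv f₁) t)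
        = fun _ => (0:ℝ) := by
      funext t
      linear_combination hB t y
    have hD : HasDerivAt (fun t => ((1+a^2)*deriv (deriv (deriv f₂)) y)*f₁ t
        + ((2*a)*deriv (deriv f₂) y)*deriv f₁ t + (deriv f₂ y)*deriv (deriv f₁) t)
        (((1+a^2)*deriv (deriv (deriv f₂)) y)*deriv f₁ x
          + ((2*a)*deriv (deriv f₂) y)*deriv (deriv f₁) x
          + (deriv f₂ y)*deriv (deriv (deriv f₁)) x) x :=
      (((hf₁ x).hasDerivAt.const_mul _).add ((hf₁' x).hasDerivAt.const_mul _)).add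
        ((hp2d x).hasDerivAt.const_mul _)
    rw [hfun] at hD
    have h0 := hD.unique (hasDerivAt_const _ _)
    linear_combination h0
  -- the key separated identity
  have hstar : ∀ x y, deriv f₁ x * ((1+a^2)*(deriv (deriv (deriv f₂)) y * f₂ 0
      - deriv (deriv f₂) 0 * deriv f₂ y))
      + deriv (deriv f₁) x * (2*a*(deriv (deriv f₂) y * f₂ 0 - deriv f₂ 0 * deriv f₂ y)) = 0 := by
    intro x y
    linear_combination f₂ 0 * hC x y - deriv f₂ y * hA x 0
  by_cases hcase : ∀ y, deriv (deriv f₂) y * f₂ 0 = deriv f₂ 0 * deriv f₂ y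
  · refine caseQ a H₀ (deriv f₂ 0 / f₂ 0) f₁ f₂ hf₁ hf₁' hf₂ hf₂' hH₀ h₁'' h₂'' h₂'0 hH ?_
    intro y
    have h0 := h₂0 0
    field_simp
    linear_combination hcase y
  · push_neg at hcase
    obtain ⟨y₀, hy₀⟩ := hcase
    have hBne : 2*a*(deriv (deriv f₂) y₀ * f₂ 0 - deriv f₂ 0 * deriv f₂ y₀) ≠ 0 :=
      mul_ne_zero (mul_ne_zero two_ne_zero ha) (sub_ne_zero.mpr hy₀)
    refine caseP a H₀
      (-((1+a^2)*(deriv (deriv (deriv f₂)) y₀ * f₂ 0 - deriv (deriv f₂) 0 * deriv f₂ y₀))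
        /(2*a*(deriv (deriv f₂) y₀ * f₂ 0 - deriv f₂ 0 * deriv f₂ y₀)))
      f₁ f₂ hf₁ hf₁' hf₂ hf₂' hH₀ h₁'' h₂'' h₁'0 hH ?_
    intro x
    rw [div_mul_eq_mul_div, eq_div_iff hBne]
    linear_combination hstar x y₀
end
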